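/- arXiv:1302.2588 — 2 statements merged into one kernel-verified Lean document; each statement's English description precedes it below -/
import Mathlib

section
/- Let H be a finite-dimensional complex inner product space with orthonormal basis (e_j)_{j=1}^n, let ρ_1 > ρ_2 > ... > ρ_n > 0 be distinct positive reals, D the linear map with D e_j = ρ_j e_j, and A : H → H a nonnegative self-adjoint map. If U_0 is a unitary map minimizing U ↦ trace(D ∘ U† ∘ A ∘ U) over all unitaries U on H, then for each j the vector u_j := U_0 e_j is an eigenvector of A: there exists λ_j ≥ 0 with A u_j = λ_j u_j. -/
open scoped InnerProductSpace

lemma trace_onb {H : Type*} [NormedAddCommGroup H] [InnerProductSpace ℂ H]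
    [FiniteDimensional ℂ H] {n : ℕ}
    (e : OrthonormalBasis (Fin n) ℂ H) (T : H →ₗ[ℂ] H) :
    LinearMap.trace ℂ H T = ∑ i, ⟪e i, T (e i)⟫_ℂ := by
  rw [LinearMap.trace_eq_matrix_trace ℂ e.toBasis, Matrix.trace]
  simp [Matrix.diag, LinearMap.toMatrix_apply, OrthonormalBasis.coe_toBasis_repr_apply,
    OrthonormalBasis.repr_apply_apply]

lemma inner_comb {H : Type*} [NormedAddCommGroup H] [InnerProductSpace ℂ H]
    (a b a' b' : ℂ) (x y x' y' : H) :
    ⟪a • x + b • y, a' • x' + b' • y'⟫_ℂ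
      = (starRingEnd ℂ) a * a' * ⟪x, x'⟫_ℂ + (starRingEnd ℂ) a * b' * ⟪x, y'⟫_ℂ
        + (starRingEnd ℂ) b * a' * ⟪y, x'⟫_ℂ + (starRingEnd ℂ) b * b' * ⟪y, y'⟫_ℂ := by
  simp [inner_add_left, inner_add_right, inner_smul_left, inner_smul_right]
  ring

lemma aux_B_zero (B C : ℝ) (h : ∀ c s : ℝ, c^2 + s^2 = 1 → 0 ≤ s^2*C + 2*s*c*B) : B = 0 := by
  have hC : 0 ≤ C := by
    have := h 0 1 (by ring)
    linarith
  have key : ∀ ε : ℝ, 0 < ε → 2*|B| ≤ ε * C := by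
    intro ε hε
    set d := Real.sqrt (1 + ε^2) with hd
    have hd2 : d^2 = 1 + ε^2 := Real.sq_sqrt (by positivity)
    have hdpos : 0 < d := Real.sqrt_pos.mpr (by positivity)
    have hdne : d ≠ 0 := ne_of_gt hdpos
    have h1 := h (1/d) (ε/d) (by field_simp; linarith)
    have h2 := h (-(1/d)) (ε/d) (by field_simp; linarith)
    have e1 : 0 ≤ ε^2*C + 2*ε*B := by
      have := mul_nonneg (le_of_lt (pow_pos hdpos 2)) h1
      have heq : d^2 * ((ε/d)^2*C + 2*(ε/d)*(1/d)*B) = ε^2*C + 2*ε*B := by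
        field_simp
      linarith [heq ▸ this]
    have e2 : 0 ≤ ε^2*C - 2*ε*B := by
      have := mul_nonneg (le_of_lt (pow_pos hdpos 2)) h2
      have heq : d^2 * ((ε/d)^2*C + 2*(ε/d)*(-(1/d))*B) = ε^2*C - 2*ε*B := by
        field_simp; ring
      linarith [heq ▸ this]
    have habs : 2*ε*|B| ≤ ε^2*C := by
      rcases abs_cases B with ⟨hb, _⟩ | ⟨hb, _⟩ <;> rw [hb] <;> linarith
    nlinarith [habs, hε]
  by_contra hB
  have hBpos : 0 < |B| := abs_pos.mpr hB
  have := key (|B|/(C+1)) (by positivity)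
  have hlt : |B|/(C+1) * C < |B| := by
    rw [div_mul_eq_mul_div, div_lt_iff₀ (by linarith)]
    nlinarith
  linarith

theorem stmt_2 {H : Type*} [NormedAddCommGroup H] [InnerProductSpace ℂ H]
    [FiniteDimensional ℂ H] {n : ℕ}
    (e : OrthonormalBasis (Fin n) ℂ H) (ρ : Fin n → ℝ)
    (hpos : ∀ j, 0 < ρ j) (hanti : StrictAnti ρ)
    (D A : H →ₗ[ℂ] H)
    (hD : ∀ j, D (e j) = (ρ j : ℂ) • e j)
    (hA : LinearMap.adjoint A = A)
    (hApos : ∀ x : H, 0 ≤ (inner ℂ (A x) x : ℂ).re)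
    (U₀ : H →ₗ[ℂ] H)
    (hU₀ : LinearMap.adjoint U₀ ∘ₗ U₀ = LinearMap.id ∧
      U₀ ∘ₗ LinearMap.adjoint U₀ = LinearMap.id)
    (hmin : ∀ U : H →ₗ[ℂ] H,
      (LinearMap.adjoint U ∘ₗ U = LinearMap.id ∧ U ∘ₗ LinearMap.adjoint U = LinearMap.id) →
      (LinearMap.trace ℂ H (D ∘ₗ LinearMap.adjoint U₀ ∘ₗ A ∘ₗ U₀)).re ≤
        (LinearMap.trace ℂ H (D ∘ₗ LinearMap.adjoint U ∘ₗ A ∘ₗ U)).re) :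
    ∀ j, ∃ lam : ℝ, 0 ≤ lam ∧ A (U₀ (e j)) = (lam : ℂ) • U₀ (e j) := by
  classical
  obtain ⟨hU₁, hU₂⟩ := hU₀
  set u : Fin n → H := fun l => U₀ (e l) with hu_def
  have hAsym : ∀ x y : H, ⟪A x, y⟫_ℂ = ⟪x, A y⟫_ℂ := by
    intro x y
    conv_lhs => rw [← hA]
    exact LinearMap.adjoint_inner_left A y x
  have hinner : ∀ x y : H, ⟪U₀ x, U₀ y⟫_ℂ = ⟪x, y⟫_ℂ := by
    intro x y
    have h : LinearMap.adjoint U₀ (U₀ y) = y := by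
      have := congrArg (fun f => f y) hU₁
      simpa using this
    conv_rhs => rw [← h]
    rw [LinearMap.adjoint_inner_right]
  have hu_on : ∀ l m, ⟪u l, u m⟫_ℂ = if l = m then 1 else 0 := by
    intro l m
    rw [hu_def]
    simp only
    rw [hinner]
    exact orthonormal_iff_ite.mp e.orthonormal l m
  let f : H ≃ₗ[ℂ] H := LinearEquiv.ofLinear U₀ (LinearMap.adjoint U₀) hU₂ hU₁
  let uB : OrthonormalBasis (Fin n) ℂ H := e.map (f.isometryOfInner hinner)
  have huB : ∀ l, uB l = u l := fun l => by simp [uB, f]; rfl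
  have hDin : ∀ (x : H) (l : Fin n), ⟪e l, D x⟫_ℂ = (ρ l : ℂ) * ⟪e l, x⟫_ℂ := by
    intro x l
    conv_lhs => rw [← e.sum_repr' x]
    rw [map_sum, inner_sum]
    rw [Finset.sum_eq_single l]
    · rw [map_smul, hD, inner_smul_right, inner_smul_right]
      have := orthonormal_iff_ite.mp e.orthonormal l l
      rw [if_pos rfl] at this
      rw [this]; ring
    · intro b _ hb
      rw [map_smul, hD, inner_smul_right, inner_smul_right]
      have := orthonormal_iff_ite.mp e.orthonormal l b
      rw [if_neg (Ne.symm hb)] at this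
      rw [this]; ring
    · intro h; exact absurd (Finset.mem_univ l) h
  have traceJ : ∀ U : H →ₗ[ℂ] H,
      LinearMap.trace ℂ H (D ∘ₗ LinearMap.adjoint U ∘ₗ A ∘ₗ U)
        = ∑ l, (ρ l : ℂ) * ⟪U (e l), A (U (e l))⟫_ℂ := by
    intro U
    rw [trace_onb e]
    refine Finset.sum_congr rfl fun l _ => ?_
    rw [LinearMap.comp_apply, LinearMap.comp_apply, LinearMap.comp_apply, hDin,
      LinearMap.adjoint_inner_right]
  intro j
  have key : ∀ k, k ≠ j → ⟪u j, A (u k)⟫_ℂ = 0 := by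
    intro k hk
    set w : ℂ := ⟪u j, A (u k)⟫_ℂ with hw_def
    set p : ℂ := ⟪u j, A (u j)⟫_ℂ with hp_def
    set q : ℂ := ⟪u k, A (u k)⟫_ℂ with hq_def
    have hwconj : ⟪u k, A (u j)⟫_ℂ = (starRingEnd ℂ) w := by
      rw [hw_def, ← inner_conj_symm, hAsym]
    have hρne : ρ j - ρ k ≠ 0 := by
      rcases lt_or_gt_of_ne (Ne.symm hk) with h | h
      · have := hanti h; intro hc; linarith
      · have := hanti h; intro hc; linarith
    have main : ∀ z : ℂ, (starRingEnd ℂ) z * z = 1 → (z * w).re = 0 := by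
      intro z hz
      have step : ∀ c s : ℝ, c^2 + s^2 = 1 →
          0 ≤ s^2 * ((ρ j - ρ k) * (q.re - p.re))
            + 2*s*c*((ρ j - ρ k) * (z*w).re) := by
        intro c s hcs
        set β : ℂ := (s : ℂ) * z with hβ_def
        set r : Fin n → H := fun l =>
          if l = j then (c:ℂ) • u j + β • u k
          else if l = k then (-(starRingEnd ℂ) β) • u j + (c:ℂ) • u k
          else u l with hr_def
        have hrj : r j = (c:ℂ) • u j + β • u k := by simp [hr_def]
        have hrk : r k = (-(starRingEnd ℂ) β) • u j + (c:ℂ) • u k := by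
          simp [hr_def, hk]
        have hro : ∀ l, l ≠ j → l ≠ k → r l = u l := by
          intro l h1 h2; simp [hr_def, h1, h2]
        have hcs' : (c:ℂ)^2 + (s:ℂ)^2 = 1 := by exact_mod_cast congrArg Complex.ofReal hcs
        have hββ : (starRingEnd ℂ) β * β = (s:ℂ)^2 := by
          rw [hβ_def]; push_cast [map_mul, Complex.conj_ofReal]
          linear_combination (s:ℂ)^2 * hz
        have hjk : j ≠ k := Ne.symm hk
        have hr_on : ∀ l m, ⟪r l, r m⟫_ℂ = if l = m then 1 else 0 := by
          intro l m
          by_cases hlj : l = j <;> by_cases hlk : l = k <;>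
            by_cases hmj : m = j <;> by_cases hmk : m = k
          -- cases with l = j and l = k : contradiction
          · exact absurd (hlj.symm.trans hlk) hjk
          · exact absurd (hlj.symm.trans hlk) hjk
          · exact absurd (hlj.symm.trans hlk) hjk
          · exact absurd (hlj.symm.trans hlk) hjk
          · exact absurd (hmj.symm.trans hmk) hjk
          · -- l = j, m = j
            rw [hlj, hmj, hrj, inner_comb]
            simp only [hu_on]; simp [hu_on, hjk, hk, Complex.conj_ofReal]
            linear_combination hcs' + hββ
          · -- l = j, m = k
            rw [hlj, hmk, hrj, hrk, inner_comb]
            simp only [hu_on]; simp [hu_on, hjk, hk, Complex.conj_ofReal]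
            ring
          · -- l = j, m other
            rw [hlj, hro m hmj hmk, hrj, inner_add_left, inner_smul_left, inner_smul_left,
              hu_on, hu_on, if_neg (fun h => hmj h.symm), if_neg (fun h => hmk h.symm)]
            ring
          · exact absurd (hmj.symm.trans hmk) hjk
          · -- l = k, m = j
            rw [hlk, hmj, hrk, hrj, inner_comb]
            simp only [hu_on]; simp [hu_on, hjk, hk, Complex.conj_ofReal, map_neg]
            ring
          · -- l = k, m = k
            rw [hlk, hmk, hrk, inner_comb]
            simp only [hu_on]; simp [hu_on, hjk, hk, Complex.conj_ofReal, map_neg]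
            linear_combination hcs' + hββ
          · -- l = k, m other
            rw [hlk, hro m hmj hmk, hrk, inner_add_left, inner_smul_left, inner_smul_left,
              hu_on, hu_on, if_neg (fun h => hmj h.symm), if_neg (fun h => hmk h.symm)]
            ring
          · exact absurd (hmj.symm.trans hmk) hjk
          · -- l other, m = j
            rw [hmj, hro l hlj hlk, hrj, inner_add_right, inner_smul_right, inner_smul_right,
              hu_on, hu_on, if_neg hlj, if_neg hlk]
            ring
          · -- l other, m = k
            rw [hmk, hro l hlj hlk, hrk, inner_add_right, inner_smul_right, inner_smul_right,
              hu_on, hu_on, if_neg hlj, if_neg hlk]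
            ring
          · rw [hro l hlj hlk, hro m hmj hmk, hu_on]
        -- the unitary V
        set V : H →ₗ[ℂ] H := e.toBasis.constr ℂ r with hV_def
        have hVe : ∀ l, V (e l) = r l := by
          intro l
          have h8 : e.toBasis l = e l := by rw [OrthonormalBasis.coe_toBasis]
          have := e.toBasis.constr_basis ℂ r l
          rwa [h8] at this
        have hadj : LinearMap.adjoint V ∘ₗ V = LinearMap.id := by
          apply e.toBasis.ext
          intro m'
          have h8 : e.toBasis m' = e m' := by rw [OrthonormalBasis.coe_toBasis]
          rw [h8, LinearMap.comp_apply, LinearMap.id_apply]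
          calc LinearMap.adjoint V (V (e m'))
              = ∑ l', ⟪e l', LinearMap.adjoint V (V (e m'))⟫_ℂ • e l' := (e.sum_repr' _).symm
            _ = ∑ l', ⟪V (e l'), V (e m')⟫_ℂ • e l' := by
                refine Finset.sum_congr rfl fun l' _ => ?_
                rw [LinearMap.adjoint_inner_right]
            _ = ∑ l', (if l' = m' then (1:ℂ) else 0) • e l' := by
                refine Finset.sum_congr rfl fun l' _ => ?_
                rw [hVe, hVe, hr_on]
            _ = e m' := by simp
        have hadj2 : V ∘ₗ LinearMap.adjoint V = LinearMap.id := by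
          exact (mul_eq_one_comm (a := LinearMap.adjoint V) (b := V)).mp hadj
        have hineq := hmin V ⟨hadj, hadj2⟩
        rw [traceJ, traceJ] at hineq
        have hVu : ∀ l, (ρ l : ℂ) * ⟪V (e l), A (V (e l))⟫_ℂ
            = (ρ l : ℂ) * ⟪r l, A (r l)⟫_ℂ := fun l => by rw [hVe]
        rw [Finset.sum_congr rfl (fun l _ => hVu l)] at hineq
        set F : Fin n → ℝ := fun l =>
          ((ρ l:ℂ) * ⟪r l, A (r l)⟫_ℂ).re - ((ρ l:ℂ) * ⟪u l, A (u l)⟫_ℂ).re with hF_def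
        have hsum : 0 ≤ ∑ l, F l := by
          have h1 : (∑ l, (ρ l:ℂ) * ⟪u l, A (u l)⟫_ℂ).re
              = ∑ l, ((ρ l:ℂ) * ⟪u l, A (u l)⟫_ℂ).re := by
            exact Complex.re_sum _ _
          have h2 : (∑ l, (ρ l:ℂ) * ⟪r l, A (r l)⟫_ℂ).re
              = ∑ l, ((ρ l:ℂ) * ⟪r l, A (r l)⟫_ℂ).re := by
            exact Complex.re_sum _ _
          rw [h1, h2] at hineq
          rw [hF_def, Finset.sum_sub_distrib]
          linarith
        have hFzero : ∀ l, l ≠ j → l ≠ k → F l = 0 := by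
          intro l h1 h2; rw [hF_def]; simp only; rw [hro l h1 h2]; ring
        have hsum2 : ∑ l ∈ ({j, k} : Finset (Fin n)), F l = ∑ l, F l := by
          refine Finset.sum_subset (Finset.subset_univ _) fun x _ hx => ?_
          simp only [Finset.mem_insert, Finset.mem_singleton, not_or] at hx
          exact hFzero x hx.1 hx.2
        have hpair : ∑ l ∈ ({j, k} : Finset (Fin n)), F l = F j + F k :=
          Finset.sum_pair (Ne.symm hk)
        have hArj : A (r j) = (c:ℂ) • A (u j) + β • A (u k) := by
          rw [hrj, map_add, map_smul, map_smul]
        have hArk : A (r k) = (-(starRingEnd ℂ) β) • A (u j) + (c:ℂ) • A (u k) := by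
          rw [hrk, map_add, map_smul, map_smul]
        have hexp_j : ⟪r j, A (r j)⟫_ℂ
            = (c:ℂ)^2 * p + ((c:ℂ)*β) * w + ((c:ℂ)*((starRingEnd ℂ) β)) * (starRingEnd ℂ) w
              + (s:ℂ)^2 * q := by
          rw [hArj, hrj, inner_comb, hwconj, Complex.conj_ofReal, ← hp_def, ← hq_def, ← hw_def]
          linear_combination q * hββ
        have hexp_k : ⟪r k, A (r k)⟫_ℂ
            = (s:ℂ)^2 * p + (c:ℂ)^2 * q - (β*(c:ℂ)) * w
              - ((c:ℂ)*((starRingEnd ℂ) β)) * (starRingEnd ℂ) w := by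
          rw [hArk, hrk, inner_comb, hwconj, Complex.conj_ofReal, ← hp_def, ← hq_def, ← hw_def]
          have hcc : (starRingEnd ℂ) (-(starRingEnd ℂ) β) = -β := by simp
          rw [hcc]
          linear_combination p * hββ
        have hβzw : β * w = (s:ℂ) * (z * w) := by rw [hβ_def]; ring
        have hβzwc : (starRingEnd ℂ) β * (starRingEnd ℂ) w
            = (s:ℂ) * (starRingEnd ℂ) (z * w) := by
          rw [hβ_def, map_mul, map_mul, Complex.conj_ofReal]; ring
        have hcplx : (ρ j:ℂ) * ⟪r j, A (r j)⟫_ℂ + (ρ k:ℂ) * ⟪r k, A (r k)⟫_ℂ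
              - (ρ j:ℂ) * p - (ρ k:ℂ) * q
            = ((s^2*(ρ j - ρ k) : ℝ):ℂ) * (q - p)
              + ((s*c*(ρ j - ρ k) : ℝ):ℂ) * ((2*(z*w).re : ℝ) : ℂ) := by
          rw [hexp_j, hexp_k]
          have hzw : ((2*(z*w).re : ℝ) : ℂ) = z*w + (starRingEnd ℂ) (z*w) :=
            (Complex.add_conj (z*w)).symm
          rw [hzw]
          push_cast
          linear_combination ((ρ j:ℂ)*p + (ρ k:ℂ)*q) * hcs'
            + ((c:ℂ)*(ρ j:ℂ) - (c:ℂ)*(ρ k:ℂ)) * hβzw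
            + ((c:ℂ)*(ρ j:ℂ) - (c:ℂ)*(ρ k:ℂ)) * hβzwc
        have hFj : F j = ((ρ j:ℂ) * ⟪r j, A (r j)⟫_ℂ).re - ((ρ j:ℂ) * p).re := by
          rw [hF_def, hp_def]
        have hFk : F k = ((ρ k:ℂ) * ⟪r k, A (r k)⟫_ℂ).re - ((ρ k:ℂ) * q).re := by
          rw [hF_def, hq_def]
        have hquad : F j + F k = s^2 * ((ρ j - ρ k) * (q.re - p.re))
            + 2*s*c*((ρ j - ρ k) * (z*w).re) := by
          have hre := congrArg Complex.re hcplx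
          rw [hFj, hFk]
          simp only [Complex.add_re, Complex.sub_re, Complex.re_ofReal_mul,
            Complex.ofReal_re] at hre ⊢
          ring_nf at hre ⊢
          linarith [hre]
        rw [← hsum2, hpair, hquad] at hsum
        exact hsum
      have hB := aux_B_zero ((ρ j - ρ k) * (z*w).re) ((ρ j - ρ k)*(q.re - p.re)) step
      rcases mul_eq_zero.mp hB with h | h
      · exact absurd h hρne
      · exact h
    have h1 := main 1 (by simp)
    have h2 := main Complex.I (by simp)
    have hre : w.re = 0 := by simpa using h1
    have him : w.im = 0 := by
      have : (Complex.I * w).re = -w.im := by simp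
      rw [this] at h2; linarith
    exact Complex.ext hre him
  -- final assembly
  refine ⟨(⟪u j, A (u j)⟫_ℂ).re, ?_, ?_⟩
  · have h0 := hApos (u j)
    have h : (inner ℂ (A (u j)) (u j) : ℂ) = ⟪u j, A (u j)⟫_ℂ := hAsym _ _
    rw [h] at h0
    exact h0
  · show A (u j) = ((((⟪u j, A (u j)⟫_ℂ).re : ℝ)) : ℂ) • u j
    have hexp : A (u j) = ∑ l, ⟪u l, A (u j)⟫_ℂ • u l := by
      conv_lhs => rw [← uB.sum_repr' (A (u j))]
      exact Finset.sum_congr rfl fun l _ => by rw [huB]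
    have hsingle : (∑ l, ⟪u l, A (u j)⟫_ℂ • u l) = ⟪u j, A (u j)⟫_ℂ • u j := by
      rw [Finset.sum_eq_single j]
      · intro b _ hb
        have hz : ⟪u b, A (u j)⟫_ℂ = 0 := by
          rw [← hAsym, ← inner_conj_symm, key b hb, map_zero]
        rw [hz, zero_smul]
      · intro h; exact absurd (Finset.mem_univ j) h
    have hc : (starRingEnd ℂ) ⟪u j, A (u j)⟫_ℂ = ⟪u j, A (u j)⟫_ℂ := by
      rw [inner_conj_symm, hAsym]
    have hre : ((⟪u j, A (u j)⟫_ℂ).re : ℂ) = ⟪u j, A (u j)⟫_ℂ :=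
      Complex.conj_eq_iff_re.mp hc
    calc A (u j) = ∑ l, ⟪u l, A (u j)⟫_ℂ • u l := hexp
      _ = ⟪u j, A (u j)⟫_ℂ • u j := hsingle
      _ = ((((⟪u j, A (u j)⟫_ℂ).re : ℝ)) : ℂ) • u j := by rw [hre]
end

section
/- Let H be a finite-dimensional complex inner product space with orthonormal basis (e_j)_{j=1}^n, ρ_1 > ρ_2 > ... > ρ_n > 0 distinct, D e_j = ρ_j e_j, and A nonnegative self-adjoint. If U_0 is a unitary minimizer of U ↦ trace(D U† A U), and λ_j := ⟨A U_0 e_j, U_0 e_j⟩, then the eigenvalues λ_j are in nondecreasing order: λ_1 ≤ λ_2 ≤ ... ≤ λ_n. -/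
lemma trace_os {H : Type*} [NormedAddCommGroup H] [InnerProductSpace ℂ H]
    [FiniteDimensional ℂ H] {n : ℕ} (e : OrthonormalBasis (Fin n) ℂ H)
    (T : H →ₗ[ℂ] H) :
    LinearMap.trace ℂ H T = ∑ k, (inner ℂ (e k) (T (e k)) : ℂ) := by
  rw [LinearMap.trace_eq_matrix_trace ℂ e.toBasis, Matrix.trace]
  congr 1
  ext k
  simp [Matrix.diag, LinearMap.toMatrix_apply, OrthonormalBasis.coe_toBasis,
    OrthonormalBasis.coe_toBasis_repr_apply, OrthonormalBasis.repr_apply_apply]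

lemma trace_key {H : Type*} [NormedAddCommGroup H] [InnerProductSpace ℂ H]
    [FiniteDimensional ℂ H] {n : ℕ} (e : OrthonormalBasis (Fin n) ℂ H)
    (ρ : Fin n → ℝ) (D A U : H →ₗ[ℂ] H)
    (hD : ∀ j, D (e j) = (ρ j : ℂ) • e j) :
    (LinearMap.trace ℂ H (D ∘ₗ LinearMap.adjoint U ∘ₗ A ∘ₗ U)).re =
      ∑ k, ρ k * (inner ℂ (A (U (e k))) (U (e k)) : ℂ).re := by
  have h1 : D ∘ₗ LinearMap.adjoint U ∘ₗ A ∘ₗ U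
      = D * (LinearMap.adjoint U ∘ₗ A ∘ₗ U) := rfl
  rw [h1, LinearMap.trace_mul_comm, trace_os e, Complex.re_sum]
  congr 1; ext k
  have h2 : ((LinearMap.adjoint U ∘ₗ A ∘ₗ U) * D) (e k)
      = (ρ k : ℂ) • LinearMap.adjoint U (A (U (e k))) := by
    simp [Module.End.mul_apply, hD]
  rw [h2, inner_smul_right, LinearMap.adjoint_inner_right, Complex.re_ofReal_mul]
  congr 1
  rw [← inner_conj_symm]; exact Complex.conj_re _

theorem stmt_3 {H : Type*} [NormedAddCommGroup H] [InnerProductSpace ℂ H]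
    [FiniteDimensional ℂ H] {n : ℕ}
    (e : OrthonormalBasis (Fin n) ℂ H) (ρ : Fin n → ℝ)
    (hpos : ∀ j, 0 < ρ j) (hanti : StrictAnti ρ)
    (D A : H →ₗ[ℂ] H)
    (hD : ∀ j, D (e j) = (ρ j : ℂ) • e j)
    (hA : LinearMap.adjoint A = A)
    (hApos : ∀ x : H, 0 ≤ (inner ℂ (A x) x : ℂ).re)
    (U₀ : H →ₗ[ℂ] H)
    (hU₀ : LinearMap.adjoint U₀ ∘ₗ U₀ = LinearMap.id ∧
      U₀ ∘ₗ LinearMap.adjoint U₀ = LinearMap.id)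
    (hmin : ∀ U : H →ₗ[ℂ] H,
      (LinearMap.adjoint U ∘ₗ U = LinearMap.id ∧ U ∘ₗ LinearMap.adjoint U = LinearMap.id) →
      (LinearMap.trace ℂ H (D ∘ₗ LinearMap.adjoint U₀ ∘ₗ A ∘ₗ U₀)).re ≤
        (LinearMap.trace ℂ H (D ∘ₗ LinearMap.adjoint U ∘ₗ A ∘ₗ U)).re)
    (lam : Fin n → ℝ)
    (hlam : ∀ j, lam j = (inner ℂ (A (U₀ (e j))) (U₀ (e j)) : ℂ).re) :
    Monotone lam := by
  intro i j hij
  rcases eq_or_lt_of_le hij with rfl | hij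
  · exact le_rfl
  set σ : Equiv.Perm (Fin n) := Equiv.swap i j with hσ
  set P : H →ₗ[ℂ] H := e.toBasis.constr ℂ (fun k => e (σ k)) with hP
  have hPe : ∀ k, P (e k) = e (σ k) := by
    intro k
    have := e.toBasis.constr_basis ℂ (fun k => e (σ k)) k
    rw [OrthonormalBasis.coe_toBasis] at this
    exact this
  have horth := orthonormal_iff_ite.mp e.orthonormal
  have hPadj : P = LinearMap.adjoint P := by
    rw [LinearMap.eq_adjoint_iff_basis e.toBasis e.toBasis]
    intro k l
    simp only [OrthonormalBasis.coe_toBasis, hPe, horth]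
    congr 1
    simp only [eq_iff_iff]
    constructor
    · rintro rfl; exact (Equiv.swap_apply_self i j k).symm
    · rintro rfl; exact Equiv.swap_apply_self i j l
  have kP : ∀ x, P (P x) = x := by
    have hPP : P ∘ₗ P = LinearMap.id := by
      apply e.toBasis.ext
      intro k
      simp [OrthonormalBasis.coe_toBasis, hPe, hσ, Equiv.swap_apply_self]
    intro x; simpa using LinearMap.ext_iff.mp hPP x
  have k1 : ∀ x, LinearMap.adjoint U₀ (U₀ x) = x := fun x => by
    simpa using LinearMap.ext_iff.mp hU₀.1 x
  have k2 : ∀ x, U₀ (LinearMap.adjoint U₀ x) = x := fun x => by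
    simpa using LinearMap.ext_iff.mp hU₀.2 x
  set U : H →ₗ[ℂ] H := U₀ ∘ₗ P with hU
  have hUadj : LinearMap.adjoint U = P ∘ₗ LinearMap.adjoint U₀ := by
    rw [hU, LinearMap.adjoint_comp, ← hPadj]
  have hUunit : LinearMap.adjoint U ∘ₗ U = LinearMap.id ∧
      U ∘ₗ LinearMap.adjoint U = LinearMap.id := by
    constructor
    · ext x; simp [hUadj, hU, k1, kP, ← hPadj]
    · ext x; simp [hUadj, hU, k2, kP, ← hPadj]
  have h := hmin U hUunit
  rw [trace_key e ρ D A U₀ hD, trace_key e ρ D A U hD] at h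
  have hUe : ∀ k, U (e k) = U₀ (e (σ k)) := fun k => by simp [hU, hPe]
  have h' : (∑ k, ρ k * lam k) ≤ ∑ k, ρ k * lam (σ k) := by
    simpa [hlam, hUe] using h
  have hre : (∑ k, ρ k * lam (σ k)) = ∑ k, ρ (σ k) * lam k := by
    rw [← Equiv.sum_comp σ (fun k => ρ (σ k) * lam k)]
    simp [hσ, Equiv.swap_apply_self]
  have hsum : (∑ k, (ρ (σ k) - ρ k) * lam k)
      = (ρ j - ρ i) * lam i + (ρ i - ρ j) * lam j := by
    rw [← Finset.sum_subset (Finset.subset_univ ({i, j} : Finset (Fin n)))]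
    · rw [Finset.sum_pair hij.ne]
      simp [hσ, Equiv.swap_apply_left, Equiv.swap_apply_right]
    · intro k _ hk
      simp only [Finset.mem_insert, Finset.mem_singleton, not_or] at hk
      rw [hσ, Equiv.swap_apply_of_ne_of_ne hk.1 hk.2]
      ring
  have hineq : 0 ≤ (ρ j - ρ i) * lam i + (ρ i - ρ j) * lam j := by
    rw [← hsum]
    have h2 : (∑ k, ρ k * lam k) ≤ ∑ k, ρ (σ k) * lam k := hre ▸ h'
    simp only [sub_mul]
    rw [Finset.sum_sub_distrib]
    linarith
  nlinarith [hanti hij]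
end
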